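/- Let r, σ, b > 0, a ∈ ℝ, and let δ > 0 satisfy a + δ > 0. Set c = min(σ, 1, b/2), η = (σ + δ·r)/(a + δ), V(x, y, z) = x² + δ·y² + (a + δ)·(z − η)², and R = b·(σ + δ·r)²/(2c·(a + δ)). If u : [0, ∞) → ℝ³ is a differentiable solution of the Lorenz-like system with V(u(0)) ≤ R, then V(u(t)) ≤ R for all t ≥ 0; i.e., the absorbing set B = {(x, y, z) : V(x, y, z) ≤ R} is positively invariant. -/

import Mathlib

/-- The absorbing set `B = {V ≤ R}` of the Lorenz-like system, where
`V(x,y,z) = x² + δy² + (a+δ)(z−η)²`, `η = (σ+δr)/(a+δ)`, `c = min(σ,1,b/2)` and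
`R = b(σ+δr)²/(2c(a+δ))`, is positively invariant: a solution starting in `B`
stays in `B` for all `t ≥ 0`. -/
theorem stmt_12 (r σ b a δ : ℝ) (hr : 0 < r) (hσ : 0 < σ) (hb : 0 < b)
    (hδ : 0 < δ) (haδ : 0 < a + δ)
    (x y z : ℝ → ℝ)
    (hx : ∀ t, 0 ≤ t → HasDerivAt x (-σ * (x t - y t) - a * y t * z t) t)
    (hy : ∀ t, 0 ≤ t → HasDerivAt y (r * x t - y t - x t * z t) t)
    (hz : ∀ t, 0 ≤ t → HasDerivAt z (-b * z t + x t * y t) t) :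
    let c := min σ (min 1 (b / 2))
    let η := (σ + δ * r) / (a + δ)
    let V : ℝ → ℝ → ℝ → ℝ := fun X Y Z =>
      X ^ 2 + δ * Y ^ 2 + (a + δ) * (Z - η) ^ 2
    let R := b * (σ + δ * r) ^ 2 / (2 * c * (a + δ))
    V (x 0) (y 0) (z 0) ≤ R → ∀ t, 0 ≤ t → V (x t) (y t) (z t) ≤ R := by
  intro c η V R h0 t ht
  have hc : 0 < c := lt_min hσ (lt_min one_pos (by linarith))
  have hcσ : c ≤ σ := min_le_left _ _
  have hc1 : c ≤ 1 := (min_le_right _ _).trans (min_le_left _ _)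
  have hcb : c ≤ b / 2 := (min_le_right _ _).trans (min_le_right _ _)
  have hηdef : (a + δ) * η = σ + δ * r := by
    show (a + δ) * ((σ + δ * r) / (a + δ)) = _
    field_simp
  have h2cR : 2 * c * R = b * (a + δ) * η ^ 2 := by
    show 2 * c * (b * (σ + δ * r) ^ 2 / (2 * c * (a + δ))) = _
    rw [← hηdef]
    field_simp
  set g : ℝ → ℝ := fun s =>
    (x s ^ 2 + δ * y s ^ 2 + (a + δ) * (z s - η) ^ 2 - R) * Real.exp (2 * c * s)
    with hgdef
  have hderiv : ∀ s, 0 ≤ s → HasDerivAt g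
      (((2 * x s * (-σ * (x s - y s) - a * y s * z s)
        + δ * (2 * y s * (r * x s - y s - x s * z s))
        + (a + δ) * (2 * (z s - η) * (-b * z s + x s * y s)))
        + 2 * c * (x s ^ 2 + δ * y s ^ 2 + (a + δ) * (z s - η) ^ 2 - R))
        * Real.exp (2 * c * s)) s := by
    intro s hs
    have hx' := hx s hs
    have hy' := hy s hs
    have hz' := hz s hs
    have h1 : HasDerivAt (fun u => x u ^ 2 + δ * y u ^ 2 + (a + δ) * (z u - η) ^ 2 - R)
        (2 * x s * (-σ * (x s - y s) - a * y s * z s)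
        + δ * (2 * y s * (r * x s - y s - x s * z s))
        + (a + δ) * (2 * (z s - η) * (-b * z s + x s * y s))) s := by
      have hX := hx'.fun_pow 2
      have hY := (hy'.fun_pow 2).const_mul δ
      have hZ := ((hz'.sub_const η).fun_pow 2).const_mul (a + δ)
      have h := ((hX.fun_add hY).fun_add hZ).sub_const R
      convert h using 1
      · rfl
      · rfl
      push_cast
      ring
    have hE : HasDerivAt (fun u => Real.exp (2 * c * u)) (Real.exp (2 * c * s) * (2 * c)) s := by
      simpa using ((hasDerivAt_id s).const_mul (2 * c)).exp
    have h := h1.fun_mul hE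
    convert h using 1
    · rfl
    · rfl
    ring
  have hnonpos : ∀ s, 0 ≤ s →
      ((2 * x s * (-σ * (x s - y s) - a * y s * z s)
        + δ * (2 * y s * (r * x s - y s - x s * z s))
        + (a + δ) * (2 * (z s - η) * (-b * z s + x s * y s)))
        + 2 * c * (x s ^ 2 + δ * y s ^ 2 + (a + δ) * (z s - η) ^ 2 - R))
        * Real.exp (2 * c * s) ≤ 0 := by
    intro s hs
    apply mul_nonpos_of_nonpos_of_nonneg _ (Real.exp_nonneg _)
    have hη2 : (a + δ) * η * (x s * y s) = (σ + δ * r) * (x s * y s) := by rw [hηdef]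
    nlinarith [h2cR, hη2,
      mul_nonneg (by linarith : (0:ℝ) ≤ σ - c) (sq_nonneg (x s)),
      mul_nonneg (mul_nonneg hδ.le (by linarith : (0:ℝ) ≤ 1 - c)) (sq_nonneg (y s)),
      mul_nonneg (mul_nonneg (by linarith : (0:ℝ) ≤ b - 2 * c) haδ.le) (sq_nonneg (z s - η)),
      mul_nonneg (mul_nonneg hb.le haδ.le) (sq_nonneg (z s))]
  have hcont : ContinuousOn g (Set.Ici (0 : ℝ)) := fun s hs =>
    (hderiv s hs).continuousAt.continuousWithinAt
  have hanti : AntitoneOn g (Set.Ici (0 : ℝ)) := by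
    apply antitoneOn_of_deriv_nonpos (convex_Ici 0) hcont
    · intro s hs
      rw [interior_Ici] at hs
      exact (hderiv s hs.le).differentiableAt.differentiableWithinAt
    · intro s hs
      rw [interior_Ici] at hs
      rw [(hderiv s hs.le).deriv]
      exact hnonpos s hs.le
  have h0' : x 0 ^ 2 + δ * y 0 ^ 2 + (a + δ) * (z 0 - η) ^ 2 ≤ R := h0
  have hg0 : g 0 ≤ 0 := by
    have h : x 0 ^ 2 + δ * y 0 ^ 2 + (a + δ) * (z 0 - η) ^ 2 - R ≤ 0 := by linarith
    exact mul_nonpos_of_nonpos_of_nonneg h (Real.exp_nonneg _)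
  have hgt : g t ≤ 0 := le_trans (hanti Set.self_mem_Ici ht ht) hg0
  have hexp : (0 : ℝ) < Real.exp (2 * c * t) := Real.exp_pos _
  have hW : x t ^ 2 + δ * y t ^ 2 + (a + δ) * (z t - η) ^ 2 - R ≤ 0 := by
    by_contra hcon
    push_neg at hcon
    have := mul_pos hcon hexp
    simp only [hgdef] at hgt
    linarith
  show x t ^ 2 + δ * y t ^ 2 + (a + δ) * (z t - η) ^ 2 ≤ R
  linarith
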